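/- arXiv:2504.00570 — 3 statements merged into one kernel-verified Lean document; each statement's English description precedes it below -/
import Mathlib

section
/- Let a, b be real constants with a² + b > 0 and let f(u) = √(-u² + 2au + b) on the interval I = (a - √(a²+b), a + √(a²+b)). Then f is positive on I and satisfies 1 + f'(u)² + f(u)·f''(u) = 0 for all u ∈ I. -/
theorem stmt5 (a b : ℝ) (hab : 0 < a ^ 2 + b) :
    let f : ℝ → ℝ := fun u => Real.sqrt (-u ^ 2 + 2 * a * u + b)
    let I : Set ℝ := Set.Ioo (a - Real.sqrt (a ^ 2 + b)) (a + Real.sqrt (a ^ 2 + b))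
    (∀ u ∈ I, 0 < f u) ∧
    (∀ u ∈ I, 1 + (deriv f u) ^ 2 + f u * deriv (deriv f) u = 0) := by
  intro f I
  have hs : Real.sqrt (a ^ 2 + b) ^ 2 = a ^ 2 + b := Real.sq_sqrt hab.le
  have hg : ∀ u ∈ I, 0 < -u ^ 2 + 2 * a * u + b := by
    intro u hu
    obtain ⟨h1, h2⟩ := hu
    nlinarith [hs]
  have hfpos : ∀ u ∈ I, 0 < f u := fun u hu => Real.sqrt_pos.mpr (hg u hu)
  set φ : ℝ → ℝ := fun u => (a - u) / Real.sqrt (-u ^ 2 + 2 * a * u + b) with hφdef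
  have hderiv : ∀ u ∈ I, HasDerivAt f (φ u) u := by
    intro u hu
    have hpoly : HasDerivAt (fun u : ℝ => -u ^ 2 + 2 * a * u + b)
        (-(2 * u ^ 1) + 2 * a * 1) u := by
      exact ((hasDerivAt_pow 2 u).neg.add ((hasDerivAt_id u).const_mul (2 * a))).add_const b
    have h := hpoly.sqrt (ne_of_gt (hg u hu))
    convert h using 1
    have hne : Real.sqrt (-u ^ 2 + 2 * a * u + b) ≠ 0 :=
      ne_of_gt (Real.sqrt_pos.mpr (hg u hu))
    simp only [hφdef]
    field_simp
    ring
  constructor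
  · exact hfpos
  · intro u hu
    have hEq : deriv f =ᶠ[nhds u] φ := by
      filter_upwards [isOpen_Ioo.mem_nhds hu] with v hv
      exact (hderiv v hv).deriv
    have hd1 : deriv f u = φ u := (hderiv u hu).deriv
    have hd2eq : deriv (deriv f) u = deriv φ u := hEq.deriv_eq
    set t := Real.sqrt (-u ^ 2 + 2 * a * u + b) with ht
    have htpos : 0 < t := Real.sqrt_pos.mpr (hg u hu)
    have ht2 : t ^ 2 = -u ^ 2 + 2 * a * u + b := Real.sq_sqrt (hg u hu).le
    have hnum : HasDerivAt (fun u : ℝ => a - u) (-1) u := by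
      simpa using (hasDerivAt_id u).const_sub a
    have hden : HasDerivAt (fun u : ℝ => Real.sqrt (-u ^ 2 + 2 * a * u + b)) (φ u) u :=
      hderiv u hu
    have hφd : HasDerivAt φ (((-1) * t - (a - u) * φ u) / t ^ 2) u :=
      hnum.div hden (ne_of_gt htpos)
    have hd2 : deriv φ u = ((-1) * t - (a - u) * φ u) / t ^ 2 := hφd.deriv
    have hfu : f u = t := rfl
    rw [hd1, hd2eq, hd2, hfu, hφdef]
    have htne : t ≠ 0 := ne_of_gt htpos
    simp only [← ht]
    field_simp
    ring
end

section
/- Let f be a positive twice differentiable function on an interval I satisfying 1 + f'(u)² + f(u)·f''(u) = 0 for all u ∈ I. Then there exist constants a, b such that f(u)² = -u² + 2au + b for all u ∈ I. -/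
lemma const_on_of_deriv_zero {g : ℝ → ℝ} {s : Set ℝ} (hs : Convex ℝ s)
    (hf : ∀ x ∈ s, DifferentiableAt ℝ g x) (h' : ∀ x ∈ s, deriv g x = 0)
    {x y : ℝ} (hx : x ∈ s) (hy : y ∈ s) : g x = g y := by
  have := hs.norm_image_sub_le_of_norm_deriv_le (C := 0) hf (fun z hz => by simp [h' z hz]) hx hy
  simpa [sub_eq_zero, eq_comm] using this

theorem stmt6 (f : ℝ → ℝ) (I : Set ℝ) (hI : IsOpen I) (hI' : I.OrdConnected)
    (hpos : ∀ u ∈ I, 0 < f u)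
    (hf : ∀ u ∈ I, DifferentiableAt ℝ f u)
    (hf' : ∀ u ∈ I, DifferentiableAt ℝ (deriv f) u)
    (hode : ∀ u ∈ I, 1 + (deriv f u) ^ 2 + f u * deriv (deriv f) u = 0) :
    ∃ a b : ℝ, ∀ u ∈ I, (f u) ^ 2 = -u ^ 2 + 2 * a * u + b := by
  rcases I.eq_empty_or_nonempty with rfl | ⟨x₀, hx₀⟩
  · exact ⟨0, 0, by simp⟩
  have hconv : Convex ℝ I := convex_iff_ordConnected.2 hI'
  set g : ℝ → ℝ := fun u => f u ^ 2 + u ^ 2 with hg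
  have hgd : ∀ u ∈ I, HasDerivAt g (2 * f u * deriv f u + 2 * u) u := by
    intro u hu
    have h1 := (hf u hu).hasDerivAt
    have := ((h1.pow 2).add ((hasDerivAt_id u).pow 2))
    simp only [id_eq] at this
    exact (show HasDerivAt g _ u from this).congr_deriv (by norm_num)
  have hderiv_g : ∀ u ∈ I, deriv g u = 2 * f u * deriv f u + 2 * u :=
    fun u hu => (hgd u hu).deriv
  -- deriv g agrees with an explicit function near each point of I
  have heq : ∀ u ∈ I, deriv g =ᶠ[nhds u] fun x => 2 * f x * deriv f x + 2 * x := by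
    intro u hu
    filter_upwards [hI.mem_nhds hu] with x hx using hderiv_g x hx
  have hdg_diff : ∀ u ∈ I, DifferentiableAt ℝ (deriv g) u := by
    intro u hu
    refine (heq u hu).differentiableAt_iff.2 ?_
    exact (((differentiableAt_const 2).mul (hf u hu)).mul (hf' u hu)).add
      ((differentiableAt_const 2).mul differentiableAt_id)
  have hdg2 : ∀ u ∈ I, deriv (deriv g) u = 0 := by
    intro u hu
    rw [(heq u hu).deriv_eq]
    have h1 := ((((hf u hu).hasDerivAt.const_mul 2).mul (hf' u hu).hasDerivAt).add
      ((hasDerivAt_id u).const_mul 2))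
    simp only [id_eq] at h1
    rw [show (fun x => 2 * f x * deriv f x + 2 * x) = ((fun y => 2 * f y) * deriv f + fun y => 2 * y) from rfl, h1.deriv]
    have := hode u hu
    nlinarith [this]
  -- deriv g is constant on I
  set c := deriv g x₀ with hc
  have hdgc : ∀ u ∈ I, deriv g u = c :=
    fun u hu => const_on_of_deriv_zero hconv hdg_diff hdg2 hu hx₀
  -- g u - c * u is constant on I
  set k : ℝ → ℝ := fun u => g u - c * u with hk
  have hkd : ∀ u ∈ I, DifferentiableAt ℝ k u :=
    fun u hu => ((hgd u hu).differentiableAt).sub ((differentiableAt_const c).mul differentiableAt_id)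
  have hkd0 : ∀ u ∈ I, deriv k u = 0 := by
    intro u hu
    have h1 : HasDerivAt k (deriv g u - c) u := by
      rw [hderiv_g u hu] at *
      exact ((hgd u hu).sub ((hasDerivAt_id u).const_mul c)).congr_deriv (by ring)
    rw [h1.deriv]
    rw [hdgc u hu]; ring
  refine ⟨c / 2, k x₀, fun u hu => ?_⟩
  have : k u = k x₀ := const_on_of_deriv_zero hconv hkd hkd0 hu hx₀
  have hgu : g u = f u ^ 2 + u ^ 2 := rfl
  simp only [hk, hg] at this ⊢
  nlinarith [this]
end

section
/- Let a, b be constants with a² + b > 0 and f(u) = √(-u² + 2au + b). If g satisfies g'(u) = √(f'(u)² + 1) on I = (a - √(a²+b), a + √(a²+b)), then g(u) = √(a²+b)·arcsin((u-a)/√(a²+b)) + c for some constant c, for all u ∈ I. -/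
theorem stmt7 (a b : ℝ) (hab : 0 < a ^ 2 + b) (g : ℝ → ℝ)
    (hg : ∀ u ∈ Set.Ioo (a - Real.sqrt (a ^ 2 + b)) (a + Real.sqrt (a ^ 2 + b)),
      HasDerivAt g
        (Real.sqrt ((deriv (fun u : ℝ => Real.sqrt (-u ^ 2 + 2 * a * u + b)) u) ^ 2 + 1)) u) :
    ∃ c : ℝ, ∀ u ∈ Set.Ioo (a - Real.sqrt (a ^ 2 + b)) (a + Real.sqrt (a ^ 2 + b)),
      g u = Real.sqrt (a ^ 2 + b) * Real.arcsin ((u - a) / Real.sqrt (a ^ 2 + b)) + c := by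
  set s := Real.sqrt (a ^ 2 + b) with hs_def
  have hs : 0 < s := Real.sqrt_pos.mpr hab
  have hs2 : s ^ 2 = a ^ 2 + b := Real.sq_sqrt hab.le
  set I : Set ℝ := Set.Ioo (a - s) (a + s) with hI
  set F : ℝ → ℝ := fun u => s * Real.arcsin ((u - a) / s) with hF
  -- positivity of the radicand on I
  have hq : ∀ u ∈ I, 0 < -u ^ 2 + 2 * a * u + b := by
    intro u hu
    obtain ⟨hu1, hu2⟩ := hu
    have h1 : (u - a) ^ 2 < s ^ 2 := by
      have h : |u - a| < s := abs_lt.mpr ⟨by linarith, by linarith⟩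
      calc (u - a) ^ 2 = |u - a| ^ 2 := by rw [sq_abs]
        _ < s ^ 2 := by exact pow_lt_pow_left₀ h (abs_nonneg _) (by norm_num)
    nlinarith [hs2]
  -- the common derivative value
  have key : ∀ u ∈ I,
      Real.sqrt ((deriv (fun u : ℝ => Real.sqrt (-u ^ 2 + 2 * a * u + b)) u) ^ 2 + 1)
        = s / Real.sqrt (-u ^ 2 + 2 * a * u + b) := by
    intro u hu
    have hqu := hq u hu
    have hqd : HasDerivAt (fun u : ℝ => -u ^ 2 + 2 * a * u + b) (-(2 * u) + 2 * a) u := by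
      have h1 : HasDerivAt (fun u : ℝ => u ^ 2) (2 * u) u := by
        simpa using hasDerivAt_pow 2 u
      simpa using ((h1.neg.add ((hasDerivAt_id u).const_mul (2 * a))).add_const b)
    have hfd : HasDerivAt (fun u : ℝ => Real.sqrt (-u ^ 2 + 2 * a * u + b))
        (1 / (2 * Real.sqrt (-u ^ 2 + 2 * a * u + b)) * (-(2 * u) + 2 * a)) u :=
      (Real.hasDerivAt_sqrt hqu.ne').comp u hqd
    rw [hfd.deriv]
    have hsq : Real.sqrt (-u ^ 2 + 2 * a * u + b) > 0 := Real.sqrt_pos.mpr hqu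
    have hsqs : Real.sqrt (-u ^ 2 + 2 * a * u + b) ^ 2 = -u ^ 2 + 2 * a * u + b :=
      Real.sq_sqrt hqu.le
    have h2 : (1 / (2 * Real.sqrt (-u ^ 2 + 2 * a * u + b)) * (-(2 * u) + 2 * a)) ^ 2 + 1
        = (a ^ 2 + b) / (-u ^ 2 + 2 * a * u + b) := by
      field_simp
      have hq' : u * (-u + 2 * a) + b = -u ^ 2 + 2 * a * u + b := by ring
      rw [hq', hsqs, div_add_one hqu.ne']
      congr 1
      ring
    rw [h2, Real.sqrt_div hab.le, ← hs_def]
  -- derivative of F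
  have hFd : ∀ u ∈ I, HasDerivAt F (s / Real.sqrt (-u ^ 2 + 2 * a * u + b)) u := by
    intro u hu
    have hqu := hq u hu
    have hx1 : (u - a) / s ≠ -1 := by
      intro h
      have : u - a = -s := by field_simp at h; linarith
      have := hu.1; linarith
    have hx2 : (u - a) / s ≠ 1 := by
      intro h
      have : u - a = s := by field_simp at h; linarith
      have := hu.2; linarith
    have hinner : HasDerivAt (fun u : ℝ => (u - a) / s) (1 / s) u := by
      simpa using ((hasDerivAt_id u).sub_const a).div_const s
    have harc := (Real.hasDerivAt_arcsin hx1 hx2).comp u hinner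
    have := harc.const_mul s
    convert this using 1
    case e'_4 => rfl
    case e'_5 => rfl
    case e'_8 => rfl
    have h1 : 1 - ((u - a) / s) ^ 2 = (-u ^ 2 + 2 * a * u + b) / s ^ 2 := by
      field_simp
      nlinarith [hs2]
    rw [h1, Real.sqrt_div' _ (sq_nonneg s), Real.sqrt_sq hs.le]
    field_simp
  -- g - F has zero derivative on I
  have hzero : ∀ u ∈ I, HasDerivAt (fun u => g u - F u) 0 u := by
    intro u hu
    have := (hg u hu).sub (hFd u hu)
    rwa [key u hu, sub_self] at this
  have hconv : Convex ℝ I := convex_Ioo _ _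
  have ha : a ∈ I := ⟨by linarith, by linarith⟩
  refine ⟨g a - F a, fun u hu => ?_⟩
  have hdiff : DifferentiableOn ℝ (fun u => g u - F u) I := fun x hx =>
    (hzero x hx).differentiableAt.differentiableWithinAt
  have hfz : ∀ x ∈ I, fderivWithin ℝ (fun u => g u - F u) I x = 0 := by
    intro x hx
    have hopen : IsOpen I := isOpen_Ioo
    rw [fderivWithin_of_isOpen hopen hx]
    have := (hzero x hx).hasFDerivAt.fderiv
    rw [this]
    ext
    simp [ContinuousLinearMap.smulRight_apply]
  have := hconv.is_const_of_fderivWithin_eq_zero hdiff hfz hu ha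
  have hFa : F a = 0 := by simp [hF]
  have : g u - F u = g a - F a := this
  rw [hFa] at this ⊢
  simp only [hF] at this ⊢
  linarith
end
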